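/- Let a, b, d1, d2, r, l > 0 and let (u, v) be a positive steady state of the diffusive Holling–Tanner system on (0, lπ). Then u(x) ≤ 1 and v(x) ≤ 1 for every x ∈ [0, lπ], and moreover the maximum of v over [0, lπ] is at least b/(a + b). -/

import Mathlib

open Set Filter Topology

lemma deriv2_of_contDiff_two {f : ℝ → ℝ} (hf : ContDiff ℝ 2 f) :
    Differentiable ℝ f ∧ ContDiff ℝ 1 (deriv f) := by
  have h2 : ContDiff ℝ ((1 : ℕ) + 1) f := by exact_mod_cast hf
  exact ⟨(contDiff_succ_iff_deriv.mp h2).1, (contDiff_succ_iff_deriv.mp h2).2.2⟩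

lemma secondDeriv_nonpos_of_isMaxOn {L : ℝ} (hL : 0 < L) {f : ℝ → ℝ}
    (hf : ContDiff ℝ 2 f) {x0 : ℝ} (hx0 : x0 ∈ Icc 0 L)
    (hmax : IsMaxOn f (Icc 0 L) x0)
    (h0 : deriv f 0 = 0) (hLd : deriv f L = 0) :
    deriv (deriv f) x0 ≤ 0 := by
  obtain ⟨hfd, hg⟩ := deriv2_of_contDiff_two hf
  set g := deriv f with hgdef
  have hgdiff : Differentiable ℝ g := hg.differentiable one_ne_zero
  have hgcont : Continuous g := hgdiff.continuous
  obtain ⟨hx0l, hx0r⟩ := hx0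
  -- first derivative vanishes at x0
  have hg0 : g x0 = 0 := by
    rcases eq_or_lt_of_le hx0l with h|h
    · rw [← h]; exact h0
    rcases eq_or_lt_of_le hx0r with h'|h'
    · rw [h']; exact hLd
    · have : IsLocalMax f x0 := hmax.isLocalMax (Icc_mem_nhds h h')
      exact this.deriv_eq_zero
  by_contra hc
  push_neg at hc
  have hslope : Tendsto (slope g x0) (𝓝[≠] x0) (𝓝 (deriv g x0)) :=
    hasDerivAt_iff_tendsto_slope.mp (hgdiff x0).hasDerivAt
  have ev : ∀ᶠ y in 𝓝[≠] x0, 0 < slope g x0 y := hslope.eventually (eventually_gt_nhds hc)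
  rcases lt_or_eq_of_le hx0r with hlt | heq
  · -- x0 < L : g > 0 just to the right, f increases, contradiction
    have evR : ∀ᶠ y in 𝓝[>] x0, 0 < slope g x0 y :=
      ev.filter_mono (nhdsWithin_mono _ (fun y hy => ne_of_gt hy))
    obtain ⟨t, ht, hsub⟩ := mem_nhdsGT_iff_exists_Ioo_subset.mp evR
    set z := min t L with hz
    have hx0z : x0 < z := lt_min ht hlt
    have hgpos : ∀ y ∈ Ioo x0 z, 0 < g y := by
      intro y hy
      have h1 : 0 < slope g x0 y := hsub ⟨hy.1, lt_of_lt_of_le hy.2 (min_le_left _ _)⟩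
      rw [slope_def_field, hg0, sub_zero] at h1
      have hyy : 0 < y - x0 := sub_pos.mpr hy.1
      have := mul_pos h1 hyy
      rwa [div_mul_cancel₀ _ (ne_of_gt hyy)] at this
    have hmono : StrictMonoOn f (Icc x0 z) := by
      apply strictMonoOn_of_deriv_pos (convex_Icc x0 z) (hfd.continuous.continuousOn)
      intro y hy
      rw [interior_Icc] at hy
      exact hgpos y hy
    have hzmem : z ∈ Icc 0 L := ⟨le_trans hx0l (le_of_lt hx0z), min_le_right _ _⟩
    have := hmono (left_mem_Icc.mpr hx0z.le) (right_mem_Icc.mpr hx0z.le) hx0z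
    exact absurd (hmax hzmem) (not_le.mpr this)
  · -- x0 = L : g < 0 just to the left, f decreases on the left, contradiction
    have h0x0 : 0 < x0 := heq ▸ hL
    have evL : ∀ᶠ y in 𝓝[<] x0, 0 < slope g x0 y :=
      ev.filter_mono (nhdsWithin_mono _ (fun y hy => ne_of_lt hy))
    obtain ⟨t, ht, hsub⟩ := mem_nhdsLT_iff_exists_Ioo_subset.mp evL
    set z := max t 0 with hz
    have hx0z : z < x0 := max_lt ht h0x0
    have hgneg : ∀ y ∈ Ioo z x0, g y < 0 := by
      intro y hy
      have h1 : 0 < slope g x0 y := hsub ⟨lt_of_le_of_lt (le_max_left _ _) hy.1, hy.2⟩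
      rw [slope_def_field, hg0, sub_zero] at h1
      have hyy : y - x0 < 0 := sub_neg.mpr hy.2
      by_contra hcon
      push_neg at hcon
      have : g y / (y - x0) ≤ 0 := div_nonpos_of_nonneg_of_nonpos hcon hyy.le
      linarith
    have hanti : StrictAntiOn f (Icc z x0) := by
      apply strictAntiOn_of_deriv_neg (convex_Icc z x0) (hfd.continuous.continuousOn)
      intro y hy
      rw [interior_Icc] at hy
      exact hgneg y hy
    have hzmem : z ∈ Icc 0 L := ⟨le_max_right _ _, le_trans hx0z.le hx0r⟩
    have := hanti (left_mem_Icc.mpr hx0z.le) (right_mem_Icc.mpr hx0z.le) hx0z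
    exact absurd (hmax hzmem) (not_le.mpr this)

lemma secondDeriv_nonneg_of_isMinOn {L : ℝ} (hL : 0 < L) {f : ℝ → ℝ}
    (hf : ContDiff ℝ 2 f) {x0 : ℝ} (hx0 : x0 ∈ Icc 0 L)
    (hmin : IsMinOn f (Icc 0 L) x0)
    (h0 : deriv f 0 = 0) (hLd : deriv f L = 0) :
    0 ≤ deriv (deriv f) x0 := by
  have hmaxF : IsMaxOn (fun x => -f x) (Icc 0 L) x0 := hmin.neg
  have key := secondDeriv_nonpos_of_isMaxOn hL hf.neg hx0 hmaxF
    (by rw [deriv.fun_neg']; simp [h0])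
    (by rw [deriv.fun_neg']; simp [hLd])
  rw [deriv.fun_neg'] at key
  have : deriv (fun x => -deriv f x) x0 = -deriv (deriv f) x0 := deriv.fun_neg
  rw [this] at key
  linarith


/-- A positive steady state of the diffusive Holling–Tanner system on `(0, lπ)`:
twice continuously differentiable positive functions `u, v` on `[0, lπ]` solving
`d1 u'' + u(1−u) − a u v/(u+b) = 0`, `d2 v'' + r v(1 − v/u) = 0` with Neumann
boundary conditions. -/
def IsPositiveSteadyState (a b d1 d2 r l : ℝ) (u v : ℝ → ℝ) : Prop :=
  ContDiff ℝ 2 u ∧ ContDiff ℝ 2 v ∧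
  (∀ x ∈ Set.Icc 0 (l * Real.pi), 0 < u x) ∧
  (∀ x ∈ Set.Icc 0 (l * Real.pi), 0 < v x) ∧
  (∀ x ∈ Set.Icc 0 (l * Real.pi),
    d1 * deriv (deriv u) x + u x * (1 - u x) - a * u x * v x / (u x + b) = 0) ∧
  (∀ x ∈ Set.Icc 0 (l * Real.pi),
    d2 * deriv (deriv v) x + r * v x * (1 - v x / u x) = 0) ∧
  deriv u 0 = 0 ∧ deriv u (l * Real.pi) = 0 ∧
  deriv v 0 = 0 ∧ deriv v (l * Real.pi) = 0

set_option maxHeartbeats 1000000 in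
/-- For `a, b, d1, d2, r, l > 0`, every positive steady state `(u, v)`
satisfies `u(x) ≤ 1` and `v(x) ≤ 1` on `[0, lπ]`, and the maximum of `v` over
`[0, lπ]` is at least `b/(a + b)`. -/
theorem holling_tanner_upper_bound
    (a b d1 d2 r l : ℝ) (ha : 0 < a) (hb : 0 < b) (hd1 : 0 < d1) (hd2 : 0 < d2)
    (hr : 0 < r) (hl : 0 < l) (u v : ℝ → ℝ)
    (hss : IsPositiveSteadyState a b d1 d2 r l u v) :
    (∀ x ∈ Set.Icc 0 (l * Real.pi), u x ≤ 1 ∧ v x ≤ 1) ∧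
    (∃ x ∈ Set.Icc 0 (l * Real.pi), b / (a + b) ≤ v x) := by
  obtain ⟨hu, hv, hupos, hvpos, hueq, hveq, hu0, huL, hv0, hvL⟩ := hss
  set L := l * Real.pi with hLdef
  have hL : 0 < L := mul_pos hl Real.pi_pos
  have hcomp : IsCompact (Icc (0:ℝ) L) := isCompact_Icc
  have hne : (Icc (0:ℝ) L).Nonempty := ⟨0, le_refl 0, hL.le⟩
  have hucont : ContinuousOn u (Icc 0 L) := hu.continuous.continuousOn
  have hvcont : ContinuousOn v (Icc 0 L) := hv.continuous.continuousOn
  obtain ⟨x0, hx0, hmaxu⟩ := hcomp.exists_isMaxOn hne hucont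
  obtain ⟨x1, hx1, hmaxv⟩ := hcomp.exists_isMaxOn hne hvcont
  obtain ⟨x2, hx2, hminu⟩ := hcomp.exists_isMinOn hne hucont
  obtain ⟨x3, hx3, hminv⟩ := hcomp.exists_isMinOn hne hvcont
  have hDu0 : deriv (deriv u) x0 ≤ 0 := secondDeriv_nonpos_of_isMaxOn hL hu hx0 hmaxu hu0 huL
  have hDv1 : deriv (deriv v) x1 ≤ 0 := secondDeriv_nonpos_of_isMaxOn hL hv hx1 hmaxv hv0 hvL
  have hDu2 : 0 ≤ deriv (deriv u) x2 := secondDeriv_nonneg_of_isMinOn hL hu hx2 hminu hu0 huL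
  have hDv3 : 0 ≤ deriv (deriv v) x3 := secondDeriv_nonneg_of_isMinOn hL hv hx3 hminv hv0 hvL
  -- u ≤ 1 at its max
  have hu1 : u x0 ≤ 1 := by
    have heq := hueq x0 hx0
    have h1 : 0 < u x0 := hupos x0 hx0
    have h2 : 0 < v x0 := hvpos x0 hx0
    have h3 : 0 < u x0 + b := by linarith
    have hB : 0 < a * u x0 * v x0 / (u x0 + b) :=
      div_pos (mul_pos (mul_pos ha h1) h2) h3
    nlinarith [mul_nonneg hd1.le (neg_nonneg.mpr hDu0)]
  -- v ≤ u at its max, so v ≤ 1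
  have huallx0 : ∀ x ∈ Icc 0 L, u x ≤ u x0 := fun x hx => hmaxu hx
  have hv1 : v x1 ≤ 1 := by
    have heq := hveq x1 hx1
    have h1 : 0 < u x1 := hupos x1 hx1
    have h2 : 0 < v x1 := hvpos x1 hx1
    have hrv : 0 < r * v x1 := mul_pos hr h2
    have ht : 0 ≤ 1 - v x1 / u x1 := by
      by_contra hcon
      push_neg at hcon
      nlinarith [mul_neg_of_pos_of_neg hrv hcon, mul_nonneg hd2.le (neg_nonneg.mpr hDv1)]
    have : v x1 / u x1 ≤ 1 := by linarith
    have hvu : v x1 ≤ u x1 := (div_le_one h1).mp this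
    calc v x1 ≤ u x1 := hvu
      _ ≤ u x0 := huallx0 x1 hx1
      _ ≤ 1 := hu1
  refine ⟨fun x hx => ⟨le_trans (huallx0 x hx) hu1, le_trans (hmaxv hx) hv1⟩, x1, hx1, ?_⟩
  -- now the lower bound on max v
  by_contra hcon
  push_neg at hcon
  set V := v x1 with hVdef
  set m := u x2 with hmdef
  have hm : 0 < m := hupos x2 hx2
  -- u x3 ≤ v x3 at the min of v
  have h1x3 : 0 < u x3 := hupos x3 hx3
  have h2x3 : 0 < v x3 := hvpos x3 hx3
  have huv3 : u x3 ≤ v x3 := by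
    have heq := hveq x3 hx3
    have hrv : 0 < r * v x3 := mul_pos hr h2x3
    have ht : 1 - v x3 / u x3 ≤ 0 := by
      by_contra hcon2
      push_neg at hcon2
      nlinarith [mul_pos hrv hcon2, mul_nonneg hd2.le hDv3]
    have : 1 ≤ v x3 / u x3 := by linarith
    exact (one_le_div h1x3).mp this
  have hmV : m ≤ V := by
    calc m ≤ u x3 := hminu hx3
      _ ≤ v x3 := huv3
      _ ≤ V := hmaxv hx3
  -- min of u: (1-m)(m+b) ≤ a v(x2)
  have h2x2 : 0 < v x2 := hvpos x2 hx2
  have hmb : 0 < m + b := by linarith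
  have hstep : (1 - m) * (m + b) ≤ a * v x2 := by
    have heq := hueq x2 hx2
    have hle : m * (1 - m) ≤ a * m * v x2 / (m + b) := by
      nlinarith [mul_nonneg hd1.le hDu2]
    have hle2 : m * (1 - m) * (m + b) ≤ a * m * v x2 := (le_div_iff₀ hmb).mp hle
    have hle3 : m * ((1 - m) * (m + b)) ≤ m * (a * v x2) := by nlinarith [hle2]
    exact le_of_mul_le_mul_left hle3 hm
  have hv2V : v x2 ≤ V := hmaxv hx2
  have hVab : V * (a + b) < b := (lt_div_iff₀ (by linarith)).mp hcon
  have hm1 : m < 1 := by nlinarith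
  nlinarith [mul_pos hm (sub_pos.mpr hm1), mul_le_mul_of_nonneg_left hv2V ha.le,
    mul_le_mul_of_nonneg_left hmV hb.le]
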